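/- For every real z > 0: √π/(2z³) − 1/(z√(2e)) ≤ Σ_{n=1}^∞ √n · exp(−z²n) ≤ √π/(2z³) + 1/(z√(2e)). -/

import Mathlib

open Real MeasureTheory Set Filter

namespace SqrtExpAux

noncomputable def F (c : ℝ) (t : ℝ) : ℝ := Real.sqrt t * Real.exp (-(c*t))

noncomputable def G (c : ℝ) (t : ℝ) : ℝ := t * Real.exp ((-(2*c)) * t)

lemma F_cont (c : ℝ) : Continuous (F c) :=
  Real.continuous_sqrt.mul ((Real.continuous_exp).comp (by fun_prop))

lemma F_nonneg (c t : ℝ) : 0 ≤ F c t :=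
  mul_nonneg (Real.sqrt_nonneg _) (Real.exp_pos _).le

lemma F_eq_sqrt (c : ℝ) {t : ℝ} (ht : 0 ≤ t) : F c t = Real.sqrt (G c t) := by
  rw [G, Real.sqrt_mul ht, F, ← Real.exp_half]
  congr 2
  ring

lemma hasDerivAt_G (c t : ℝ) :
    HasDerivAt (G c) ((1 - 2*c*t) * Real.exp ((-(2*c)) * t)) t := by
  have h1 : HasDerivAt (fun s : ℝ => (-(2*c)) * s) (-(2*c)) t := by
    simpa using (hasDerivAt_id t).const_mul (-(2*c))
  have h2 := h1.exp
  have h3 := (hasDerivAt_id t).mul h2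
  simp only [id_eq] at h3
  show HasDerivAt (id * fun x => Real.exp (-(2*c)*x)) _ t
  exact h3.congr_deriv (by ring)

lemma G_mono (c : ℝ) (hc : 0 < c) : MonotoneOn (G c) (Icc 0 (1/(2*c))) := by
  apply monotoneOn_of_deriv_nonneg (convex_Icc _ _)
  · exact (Continuous.mul continuous_id (Real.continuous_exp.comp (by fun_prop))).continuousOn
  · intro x hx
    exact (hasDerivAt_G c x).differentiableAt.differentiableWithinAt
  · intro x hx
    rw [interior_Icc] at hx
    rw [(hasDerivAt_G c x).deriv]
    have : 2*c*x ≤ 1 := by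
      have := hx.2
      rw [lt_div_iff₀ (by positivity)] at this
      nlinarith
    have := Real.exp_pos ((-(2*c)) * x)
    nlinarith

lemma G_anti (c : ℝ) (hc : 0 < c) : AntitoneOn (G c) (Ici (1/(2*c))) := by
  apply antitoneOn_of_deriv_nonpos (convex_Ici _)
  · exact (Continuous.mul continuous_id (Real.continuous_exp.comp (by fun_prop))).continuousOn
  · intro x hx
    exact (hasDerivAt_G c x).differentiableAt.differentiableWithinAt
  · intro x hx
    rw [interior_Ici] at hx
    rw [(hasDerivAt_G c x).deriv]
    have : 1 ≤ 2*c*x := by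
      rw [mem_Ioi, div_lt_iff₀ (by positivity)] at hx
      nlinarith
    have := Real.exp_pos ((-(2*c)) * x)
    nlinarith

lemma F_mono (c : ℝ) (hc : 0 < c) : MonotoneOn (F c) (Icc 0 (1/(2*c))) := by
  intro a ha b hb hab
  rw [F_eq_sqrt c ha.1, F_eq_sqrt c hb.1]
  exact Real.sqrt_le_sqrt (G_mono c hc ha hb hab)

lemma F_anti (c : ℝ) (hc : 0 < c) : AntitoneOn (F c) (Ici (1/(2*c))) := by
  intro a ha b hb hab
  have h0 : (0:ℝ) < 1/(2*c) := by positivity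
  rw [F_eq_sqrt c (le_trans h0.le ha), F_eq_sqrt c (le_trans h0.le hb)]
  exact Real.sqrt_le_sqrt (G_anti c hc ha hb hab)

lemma G_le (c : ℝ) (hc : 0 < c) (t : ℝ) (ht : 0 ≤ t) :
    G c t ≤ (1/(2*c)) * Real.exp (-1) := by
  have h1 : 2*c*t ≤ Real.exp (2*c*t - 1) := by
    have := Real.add_one_le_exp (2*c*t - 1)
    linarith
  have h2 : Real.exp (2*c*t - 1) * Real.exp ((-(2*c))*t) = Real.exp (-1) := by
    rw [← Real.exp_add]; congr 1; ring
  have h3 := Real.exp_pos ((-(2*c))*t)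
  have h4 : (2*c*t) * Real.exp ((-(2*c))*t) ≤ Real.exp (-1) := by
    calc (2*c*t) * Real.exp ((-(2*c))*t) ≤ Real.exp (2*c*t-1) * Real.exp ((-(2*c))*t) :=
          mul_le_mul_of_nonneg_right h1 h3.le
      _ = Real.exp (-1) := h2
  rw [G]
  rw [show t * Real.exp ((-(2*c))*t) = (1/(2*c)) * ((2*c*t) * Real.exp ((-(2*c))*t)) by
    field_simp]
  have h5 : (0:ℝ) ≤ 1/(2*c) := by positivity
  exact mul_le_mul_of_nonneg_left h4 h5

lemma F_le (c : ℝ) (hc : 0 < c) (t : ℝ) :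
    F c t ≤ Real.sqrt ((1/(2*c)) * Real.exp (-1)) := by
  rcases le_or_gt 0 t with ht | ht
  · rw [F_eq_sqrt c ht]
    exact Real.sqrt_le_sqrt (G_le c hc t ht)
  · rw [F, Real.sqrt_eq_zero_of_nonpos ht.le, zero_mul]
    positivity

lemma F_integrableOn (c : ℝ) (hc : 0 < c) : IntegrableOn (F c) (Ioi 0) := by
  have h := Real.GammaIntegral_convergent (s := 3/2) (by norm_num)
  have h2 : IntegrableOn (fun t : ℝ => Real.exp (-(c*t)) * (c*t) ^ ((3:ℝ)/2 - 1)) (Ioi 0) := by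
    have := (integrableOn_Ioi_comp_mul_left_iff
      (fun x : ℝ => Real.exp (-x) * x ^ ((3:ℝ)/2 - 1)) 0 hc).2 (by simpa using h)
    simpa using this
  have h3 : IntegrableOn (fun t : ℝ => c ^ (-((1:ℝ)/2)) *
      (Real.exp (-(c*t)) * (c*t) ^ ((3:ℝ)/2 - 1))) (Ioi 0) := h2.const_mul _
  apply h3.congr_fun _ measurableSet_Ioi
  intro x hx
  have hx0 : 0 < x := hx
  show c ^ (-((1:ℝ)/2)) * (Real.exp (-(c*x)) * (c*x) ^ ((3:ℝ)/2 - 1)) = F c x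
  rw [F, show (3:ℝ)/2 - 1 = 1/2 by norm_num, Real.mul_rpow hc.le hx0.le,
    Real.sqrt_eq_rpow]
  rw [show c ^ (-((1:ℝ)/2)) * (Real.exp (-(c*x)) * (c ^ ((1:ℝ)/2) * x ^ ((1:ℝ)/2)))
    = (c ^ (-((1:ℝ)/2)) * c ^ ((1:ℝ)/2)) * (x ^ ((1:ℝ)/2) * Real.exp (-(c*x))) by ring]
  rw [← Real.rpow_add hc]
  norm_num

lemma F_integral (c : ℝ) (hc : 0 < c) :
    ∫ t in Ioi (0:ℝ), F c t = (1/c) ^ ((3:ℝ)/2) * Real.Gamma (3/2) := by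
  rw [← Real.integral_rpow_mul_exp_neg_mul_Ioi (by norm_num : (0:ℝ) < 3/2) hc]
  apply setIntegral_congr_fun measurableSet_Ioi
  intro x hx
  have hx0 : 0 < x := hx
  show F c x = x ^ ((3:ℝ)/2 - 1) * Real.exp (-(c*x))
  rw [F, show (3:ℝ)/2 - 1 = 1/2 by norm_num, Real.sqrt_eq_rpow]

end SqrtExpAux

namespace SqrtExpAux

lemma F_summable (c : ℝ) (hc : 0 < c) : Summable (fun n : ℕ => F c ((n:ℝ)+1)) := by
  have hr0 : 0 < Real.exp (-c) := Real.exp_pos _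
  have hr1 : Real.exp (-c) < 1 := by
    rw [Real.exp_lt_one_iff]; linarith
  have h1 : Summable (fun n : ℕ => (n:ℝ) ^ 1 * Real.exp (-c) ^ n) :=
    summable_pow_mul_geometric_of_norm_lt_one 1 (by rwa [Real.norm_eq_abs, abs_of_pos hr0])
  have h2 : Summable (fun n : ℕ => Real.exp (-c) ^ n) := summable_geometric_of_lt_one hr0.le hr1
  have hs : Summable (fun n : ℕ => ((n:ℝ)+1) * Real.exp (-c) ^ (n+1)) := by
    refine ((h1.add h2).mul_right (Real.exp (-c))).congr fun n => ?_
    rw [pow_succ]; ring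
  refine Summable.of_nonneg_of_le (fun n => F_nonneg _ _) (fun n => ?_) hs
  rw [F]
  have hn1 : (0:ℝ) ≤ (n:ℝ)+1 := by positivity
  have hs1 : Real.sqrt ((n:ℝ)+1) ≤ (n:ℝ)+1 := by
    have := Real.sqrt_le_sqrt (show (n:ℝ)+1 ≤ ((n:ℝ)+1)^2 by nlinarith)
    rwa [Real.sqrt_sq hn1] at this
  have he : Real.exp (-(c*((n:ℝ)+1))) = Real.exp (-c) ^ (n+1) := by
    rw [← Real.exp_nat_mul]
    congr 1
    push_cast; ring
  rw [he]
  exact mul_le_mul_of_nonneg_right hs1 (by positivity)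

lemma M_eq (z : ℝ) (hz : 0 < z) :
    Real.sqrt ((1/(2*z^2)) * Real.exp (-1)) = 1 / (z * Real.sqrt (2 * Real.exp 1)) := by
  rw [show (1:ℝ)/(2*z^2) * Real.exp (-1) = (1/(z*Real.sqrt (2*Real.exp 1)))^2 from ?_,
    Real.sqrt_sq (by positivity)]
  rw [div_pow, mul_pow, Real.sq_sqrt (by positivity), Real.exp_neg]
  have h1 : (0:ℝ) < Real.exp 1 := Real.exp_pos _
  field_simp

lemma I_eq (z : ℝ) (hz : 0 < z) :
    (1/(z^2)) ^ ((3:ℝ)/2) * Real.Gamma (3/2) = Real.sqrt Real.pi / (2 * z^3) := by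
  have hG : Real.Gamma (3/2) = Real.sqrt Real.pi / 2 := by
    rw [show (3:ℝ)/2 = 1/2 + 1 by norm_num, Real.Gamma_add_one (by norm_num),
      Real.Gamma_one_half_eq]
    ring
  have hz2 : ((1:ℝ)/(z^2)) ^ ((3:ℝ)/2) = 1 / z^3 := by
    rw [one_div, ← Real.rpow_natCast z 2, Real.inv_rpow (by positivity),
      ← Real.rpow_mul hz.le,
      show ((2:ℕ):ℝ)*((3:ℝ)/2) = ((3:ℕ):ℝ) by norm_num, Real.rpow_natCast, one_div]
  rw [hG, hz2, div_mul_div_comm, one_mul, mul_comm (z^3) 2]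

end SqrtExpAux

open SqrtExpAux in
theorem sqrt_exp_sum_estimate (z : ℝ) (hz : 0 < z) :
    Real.sqrt Real.pi / (2 * z ^ 3) - 1 / (z * Real.sqrt (2 * Real.exp 1)) ≤
      (∑' n : ℕ, Real.sqrt (n + 1) * Real.exp (-z ^ 2 * (n + 1))) ∧
    (∑' n : ℕ, Real.sqrt (n + 1) * Real.exp (-z ^ 2 * (n + 1))) ≤
      Real.sqrt Real.pi / (2 * z ^ 3) + 1 / (z * Real.sqrt (2 * Real.exp 1)) := by
  have hc0 : (0:ℝ) < z^2 := by positivity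
  set c : ℝ := z^2 with hcdef
  set m : ℝ := 1/(2*c) with hmdef
  have hm0 : 0 < m := by positivity
  set M : ℝ := 1 / (z * Real.sqrt (2 * Real.exp 1)) with hMdef
  have hMeq : Real.sqrt (m * Real.exp (-1)) = M := by
    rw [hMdef, hmdef, hcdef]; exact M_eq z hz
  have hM0 : 0 < M := by rw [hMdef]; positivity
  have hfM : ∀ t, F c t ≤ M := by
    intro t
    have := F_le c hc0 t
    rwa [← hmdef, hMeq] at this
  have hmono : MonotoneOn (F c) (Icc 0 m) := by rw [hmdef]; exact F_mono c hc0
  have hanti : AntitoneOn (F c) (Ici m) := by rw [hmdef]; exact F_anti c hc0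
  set k : ℕ := ⌊m⌋₊ with hkdef
  have hkm : (k:ℝ) ≤ m := Nat.floor_le hm0.le
  have hmk1 : m < (k:ℝ)+1 := Nat.lt_floor_add_one m
  have hint : ∀ a b : ℝ, IntervalIntegrable (F c) MeasureTheory.volume a b :=
    fun a b => (F_cont c).intervalIntegrable a b
  have hIval : ∫ t in Ioi (0:ℝ), F c t = Real.sqrt Real.pi / (2*z^3) := by
    rw [F_integral c hc0, hcdef]; exact I_eq z hz
  have hIk_le_M : (∫ x in (k:ℝ)..((k:ℝ)+1), F c x) ≤ M := by
    calc (∫ x in (k:ℝ)..((k:ℝ)+1), F c x) ≤ ∫ _x in (k:ℝ)..((k:ℝ)+1), M := by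
          apply intervalIntegral.integral_mono_on (by linarith) (hint _ _)
            intervalIntegrable_const
          exact fun x _ => hfM x
      _ = M := by
          rw [intervalIntegral.integral_const, smul_eq_mul,
            show (k:ℝ)+1-(k:ℝ) = 1 by ring, one_mul]
  have hminle : ∀ t ∈ Icc (k:ℝ) ((k:ℝ)+1), min (F c k) (F c ((k:ℝ)+1)) ≤ F c t := by
    intro t ht
    rcases le_total t m with h | h
    · refine le_trans (min_le_left _ _) (hmono ⟨Nat.cast_nonneg k, hkm⟩
        ⟨le_trans (Nat.cast_nonneg k) ht.1, h⟩ ht.1)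
    · exact le_trans (min_le_right _ _) (hanti h (le_of_lt hmk1) ht.2)
  have hmin_le_Ik : min (F c k) (F c ((k:ℝ)+1)) ≤ ∫ x in (k:ℝ)..((k:ℝ)+1), F c x := by
    have h := intervalIntegral.integral_mono_on (μ := MeasureTheory.volume)
      (a := (k:ℝ)) (b := (k:ℝ)+1) (by linarith) intervalIntegrable_const (hint _ _) hminle
    rw [intervalIntegral.integral_const, smul_eq_mul,
      show (k:ℝ)+1-(k:ℝ) = 1 by ring, one_mul] at h
    exact h
  have hmid : F c (k:ℝ) + F c ((k:ℝ)+1) ≤ M + ∫ x in (k:ℝ)..((k:ℝ)+1), F c x := by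
    have h1 := min_add_max (F c (k:ℝ)) (F c ((k:ℝ)+1))
    have h2 : max (F c (k:ℝ)) (F c ((k:ℝ)+1)) ≤ M := max_le (hfM _) (hfM _)
    linarith
  have hadj1 : (∫ x in (0:ℝ)..(k:ℝ), F c x) + ∫ x in (k:ℝ)..((k:ℝ)+1), F c x
      = ∫ x in (0:ℝ)..((k:ℝ)+1), F c x :=
    intervalIntegral.integral_add_adjacent_intervals (hint _ _) (hint _ _)
  have hIsplit : ∫ t in Ioi (0:ℝ), F c t
      = (∫ x in (0:ℝ)..((k:ℝ)+1), F c x) + ∫ x in Ioi ((k:ℝ)+1), F c x := by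
    rw [intervalIntegral.integral_of_le (by positivity)]
    rw [← MeasureTheory.setIntegral_union (Ioc_disjoint_Ioi le_rfl) measurableSet_Ioi
      ((F_integrableOn c hc0).mono_set Ioc_subset_Ioi_self)
      ((F_integrableOn c hc0).mono_set (Ioi_subset_Ioi (by positivity)))]
    rw [Ioc_union_Ioi_eq_Ioi (by positivity)]
  -- summability and tsum rewriting
  have hsumm : Summable (fun n : ℕ => F c ((n:ℝ)+1)) := F_summable c hc0
  have hTS : (∑' n : ℕ, Real.sqrt ((n:ℝ) + 1) * Real.exp (-c * ((n:ℝ) + 1)))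
      = ∑' n : ℕ, F c ((n:ℝ)+1) := by
    refine tsum_congr fun n => ?_
    simp only [F]
    rw [neg_mul]
  set S : ℝ := ∑' n : ℕ, F c ((n:ℝ)+1) with hSdef
  -- UPPER BOUND
  have hFsum : ∀ N0 : ℕ, ∑ n ∈ Finset.range N0, F c ((n:ℝ)+1)
      ≤ Real.sqrt Real.pi / (2*z^3) + M := by
    intro N0
    set N := max N0 (k+2) with hN
    have hN2 : k+2 ≤ N := le_max_right _ _
    have hsub : ∑ n ∈ Finset.range N0, F c ((n:ℝ)+1) ≤ ∑ n ∈ Finset.range N, F c ((n:ℝ)+1) :=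
      Finset.sum_le_sum_of_subset_of_nonneg (Finset.range_subset_range.2 (le_max_left _ _))
        (fun i _ _ => F_nonneg c _)
    have e1 : ∑ j ∈ Finset.Ico 0 (N+1), F c (j:ℝ) = ∑ n ∈ Finset.range N, F c ((n:ℝ)+1) := by
      rw [Finset.sum_eq_sum_Ico_succ_bot (Nat.succ_pos N), Finset.sum_Ico_eq_sum_range]
      simp only [Nat.cast_zero, Nat.add_sub_cancel]
      rw [show F c (0:ℝ) = 0 by simp [F], zero_add]
      refine Finset.sum_congr rfl fun i _ => ?_
      congr 1
      push_cast; ring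
    have e2a : ∑ j ∈ Finset.Ico k (k+2), F c (j:ℝ) = F c (k:ℝ) + F c ((k:ℝ)+1) := by
      rw [show k+2 = (k+1)+1 by omega, Finset.sum_Ico_succ_top (by omega),
        Finset.sum_Ico_succ_top (by omega), Finset.Ico_self, Finset.sum_empty, zero_add]
      push_cast
      ring
    have e2 : ∑ j ∈ Finset.Ico 0 (N+1), F c (j:ℝ)
        = (∑ j ∈ Finset.Ico 0 k, F c (j:ℝ)) + (F c (k:ℝ) + F c ((k:ℝ)+1))
          + ∑ j ∈ Finset.Ico (k+2) (N+1), F c (j:ℝ) := by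
      rw [← Finset.sum_Ico_consecutive (fun j : ℕ => F c (j:ℝ)) (Nat.zero_le (k+2))
        (show k+2 ≤ N+1 by omega),
        ← Finset.sum_Ico_consecutive (fun j : ℕ => F c (j:ℝ)) (Nat.zero_le k)
        (show k ≤ k+2 by omega), e2a]
    have b1 : ∑ j ∈ Finset.Ico 0 k, F c (j:ℝ) ≤ ∫ x in (0:ℝ)..(k:ℝ), F c x := by
      have h := MonotoneOn.sum_le_integral_Ico (Nat.zero_le k) (f := F c)
        (by apply hmono.mono; rw [Nat.cast_zero]; exact Icc_subset_Icc le_rfl hkm)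
      rwa [Nat.cast_zero] at h
    have b3 : ∑ j ∈ Finset.Ico (k+2) (N+1), F c (j:ℝ) ≤ ∫ x in ((k:ℝ)+1)..(N:ℝ), F c x := by
      have hre : ∑ j ∈ Finset.Ico (k+2) (N+1), F c (j:ℝ)
          = ∑ i ∈ Finset.Ico (k+1) N, F c (((i+1 : ℕ)):ℝ) := by
        rw [Finset.sum_Ico_eq_sum_range, Finset.sum_Ico_eq_sum_range,
          show N+1-(k+2) = N-(k+1) by omega]
        refine Finset.sum_congr rfl fun i _ => ?_
        congr 1
        push_cast; ring
      rw [hre]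
      have h := AntitoneOn.sum_le_integral_Ico (show k+1 ≤ N by omega) (f := F c)
        (by
          apply hanti.mono
          intro t ht
          refine le_trans hmk1.le (le_trans ?_ ht.1)
          push_cast
          exact le_rfl )
      have hcast : ((k+1 : ℕ):ℝ) = (k:ℝ)+1 := by push_cast; ring
      rwa [hcast] at h
    have hadj2 : (∫ x in (0:ℝ)..((k:ℝ)+1), F c x) + ∫ x in ((k:ℝ)+1)..(N:ℝ), F c x
        = ∫ x in (0:ℝ)..(N:ℝ), F c x :=
      intervalIntegral.integral_add_adjacent_intervals (hint _ _) (hint _ _)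
    have hIle : (∫ x in (0:ℝ)..(N:ℝ), F c x) ≤ ∫ t in Ioi (0:ℝ), F c t := by
      rw [intervalIntegral.integral_of_le (by positivity : (0:ℝ) ≤ (N:ℝ))]
      exact MeasureTheory.setIntegral_mono_set (F_integrableOn c hc0)
        (Filter.Eventually.of_forall fun t => F_nonneg c t)
        (HasSubset.Subset.eventuallyLE Ioc_subset_Ioi_self)
    calc ∑ n ∈ Finset.range N0, F c ((n:ℝ)+1) ≤ ∑ n ∈ Finset.range N, F c ((n:ℝ)+1) := hsub
      _ = ∑ j ∈ Finset.Ico 0 (N+1), F c (j:ℝ) := e1.symm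
      _ = _ := e2
      _ ≤ (∫ x in (0:ℝ)..(k:ℝ), F c x) + (M + ∫ x in (k:ℝ)..((k:ℝ)+1), F c x)
            + ∫ x in ((k:ℝ)+1)..(N:ℝ), F c x := by
          exact add_le_add (add_le_add b1 hmid) b3
      _ = M + ((∫ x in (0:ℝ)..((k:ℝ)+1), F c x) + ∫ x in ((k:ℝ)+1)..(N:ℝ), F c x) := by
          rw [← hadj1]; ring
      _ = M + ∫ x in (0:ℝ)..(N:ℝ), F c x := by rw [hadj2]
      _ ≤ M + ∫ t in Ioi (0:ℝ), F c t := by linarith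
      _ = Real.sqrt Real.pi / (2*z^3) + M := by rw [hIval]; ring
  have hupper : S ≤ Real.sqrt Real.pi / (2*z^3) + M :=
    Real.tsum_le_of_sum_range_le (fun n => F_nonneg c _) hFsum
  -- LOWER BOUND
  have b1' : (∫ x in (0:ℝ)..(k:ℝ), F c x) ≤ ∑ i ∈ Finset.Ico 0 k, F c (((i+1:ℕ)):ℝ) := by
    have h := MonotoneOn.integral_le_sum_Ico (Nat.zero_le k) (f := F c)
      (by apply hmono.mono; rw [Nat.cast_zero]; exact Icc_subset_Icc le_rfl hkm)
    rwa [Nat.cast_zero] at h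
  have hkey : ∀ n : ℕ, k+1 ≤ n →
      (∫ x in ((k:ℝ)+1)..(n:ℝ), F c x) ≤ S - ∫ x in (0:ℝ)..(k:ℝ), F c x := by
    intro n hn
    have b3' : (∫ x in ((k:ℝ)+1)..(n:ℝ), F c x) ≤ ∑ j ∈ Finset.Ico (k+1) n, F c (j:ℝ) := by
      have h := AntitoneOn.integral_le_sum_Ico hn (f := F c)
        (by
          apply hanti.mono
          intro t ht
          refine le_trans hmk1.le (le_trans ?_ ht.1)
          push_cast
          exact le_rfl )
      have hcast : ((k+1 : ℕ):ℝ) = (k:ℝ)+1 := by push_cast; ring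
      rwa [hcast] at h
    have hre : ∑ i ∈ Finset.Ico 0 k, F c (((i+1:ℕ)):ℝ) = ∑ j ∈ Finset.Ico 1 (k+1), F c (j:ℝ) := by
      rw [Finset.sum_Ico_eq_sum_range, Finset.sum_Ico_eq_sum_range,
        show k-0 = k+1-1 by omega]
      refine Finset.sum_congr rfl fun i _ => ?_
      congr 1
      push_cast; ring
    have hcons : (∑ j ∈ Finset.Ico 1 (k+1), F c (j:ℝ)) + ∑ j ∈ Finset.Ico (k+1) n, F c (j:ℝ)
        = ∑ j ∈ Finset.Ico 1 n, F c (j:ℝ) :=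
      Finset.sum_Ico_consecutive (fun j : ℕ => F c (j:ℝ)) (by omega) (by omega)
    have hpart : ∑ j ∈ Finset.Ico 1 n, F c (j:ℝ) ≤ S := by
      have hre2 : ∑ j ∈ Finset.Ico 1 n, F c (j:ℝ)
          = ∑ i ∈ Finset.range (n-1), F c ((i:ℝ)+1) := by
        rw [Finset.sum_Ico_eq_sum_range]
        refine Finset.sum_congr rfl fun i _ => ?_
        congr 1
        push_cast; ring
      rw [hre2, hSdef]
      exact Summable.sum_le_tsum (Finset.range (n-1)) (fun i _ => F_nonneg c _) hsumm
    linarith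
  have hT : Filter.Tendsto (fun n : ℕ => ∫ x in ((k:ℝ)+1)..(n:ℝ), F c x) Filter.atTop
      (nhds (∫ x in Ioi ((k:ℝ)+1), F c x)) :=
    MeasureTheory.intervalIntegral_tendsto_integral_Ioi _
      ((F_integrableOn c hc0).mono_set (Ioi_subset_Ioi (by positivity)))
      tendsto_natCast_atTop_atTop
  have hIoi_le : (∫ x in Ioi ((k:ℝ)+1), F c x) ≤ S - ∫ x in (0:ℝ)..(k:ℝ), F c x := by
    refine le_of_tendsto hT ?_
    filter_upwards [Filter.eventually_ge_atTop (k+1)] with n hn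
    exact hkey n hn
  have hlower : Real.sqrt Real.pi / (2*z^3) - M ≤ S := by
    have := hIsplit
    rw [hIval] at this
    linarith [hIk_le_M, hIoi_le, hadj1]
  rw [hTS]
  exact ⟨hlower, hupper⟩
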